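/- Let Q be a Markov kernel on a measurable space (E,𝓔) whose σ-algebra is countably generated and separates points (so the diagonal {(z,z) : z ∈ E} is measurable in E × E), and suppose there exist β ∈ (0,1] and a probability measure ν with Q(x,·) ≥ β ν for all x ∈ E. Then there exists a Markov kernel Q̂ on E × E such that for all (x,y) ∈ E × E: the first marginal of Q̂((x,y),·) is Q(x,·), the second marginal is Q(y,·), and Q̂((x,y), {(z,z') : z = z'}) ≥ β. -/

import Mathlib

open MeasureTheory ProbabilityTheory
open scoped ENNReal NNReal

noncomputable section

/-- The hitting time `T_A = inf {n ≥ 1 : ω n ∈ A}`, with value `⊤ : ℕ∞` if no such `n` exists. -/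
def hitTime {S : Type*} (A : Set S) (ω : ℕ → S) : ℕ∞ :=
  sInf ((fun k : ℕ => (k : ℕ∞)) '' {k : ℕ | 1 ≤ k ∧ ω k ∈ A})

/-- `IsMarkovPath K μ₀ L` says that `L` is the law on path space `ℕ → E` of the
time-homogeneous Markov chain with transition kernel `K` and initial distribution `μ₀`
(the measure produced by the Ionescu–Tulcea construction), characterized through its
finite-dimensional distributions. -/
def IsMarkovPath {E : Type*} [MeasurableSpace E] (K : Kernel E E) (μ₀ : Measure E)
    (L : Measure (ℕ → E)) : Prop :=
  IsProbabilityMeasure L ∧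
    L.map (fun ω => ω 0) = μ₀ ∧
    ∀ n : ℕ,
      L.map (fun ω => fun i : Fin (n + 2) => ω (i : ℕ)) =
        (L.map (fun ω => fun i : Fin (n + 1) => ω (i : ℕ))).bind
          (fun v => (K (v (Fin.last n))).map (Fin.snoc v))


/-- **Coupling from a Doeblin minorization.** If `Q (x, ·) ≥ β ν` for all `x`, then there
is a Markov kernel `Q̂` on `E × E` coupling `Q` with itself such that
`Q̂ ((x,y), {(z,z') : z = z'}) ≥ β` for all `(x, y)`. -/
theorem exists_coupling_kernel_of_minorization
    {E : Type*} [MeasurableSpace E] [MeasurableSpace.CountablyGenerated E]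
    (hdiag : MeasurableSet {q : E × E | q.1 = q.2})
    (Q : Kernel E E) [IsMarkovKernel Q]
    (β : ℝ≥0∞) (hβ0 : 0 < β) (hβ1 : β ≤ 1)
    (ν : Measure E) [IsProbabilityMeasure ν]
    (hmin : ∀ x : E, β • ν ≤ Q x) :
    ∃ Qhat : Kernel (E × E) (E × E), IsMarkovKernel Qhat ∧
      ∀ x y : E,
        (Qhat (x, y)).map Prod.fst = Q x ∧
        (Qhat (x, y)).map Prod.snd = Q y ∧
        β ≤ Qhat (x, y) {q : E × E | q.1 = q.2} := by
  have hβν : IsFiniteMeasure (β • ν) := by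
    constructor
    simp only [Measure.smul_apply, smul_eq_mul, measure_univ, mul_one]
    exact lt_of_le_of_lt hβ1 ENNReal.one_lt_top
  -- the residual kernel R x = Q x - β • ν
  have hRmeas : Measurable (fun x => Q x - β • ν) := by
    apply Measure.measurable_of_measurable_coe
    intro s hs
    have h : ∀ x, (Q x - β • ν) s = Q x s - β * ν s := by
      intro x
      rw [Measure.sub_apply hs (hmin x)]
      simp [ENNReal.smul_def]
    simp_rw [h]
    exact (Kernel.measurable_coe Q hs).sub measurable_const
  set R : Kernel E E := ⟨fun x => Q x - β • ν, hRmeas⟩ with hR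
  have hRapp : ∀ x, R x = Q x - β • ν := fun _ => rfl
  have hRQ : ∀ x, R x + β • ν = Q x := by
    intro x
    rw [hRapp]
    exact Measure.sub_add_cancel_of_le (hmin x)
  have hRuniv : ∀ x, R x Set.univ = 1 - β := by
    intro x
    rw [hRapp, Measure.sub_apply MeasurableSet.univ (hmin x)]
    simp [ENNReal.smul_def]
  have hRfin : IsFiniteKernel R := by
    refine ⟨1, ENNReal.one_lt_top, fun x => ?_⟩
    rw [hRuniv]
    exact tsub_le_self
  set P : Kernel (E × E) (E × E) :=
    (R.comap Prod.fst measurable_fst) ×ₖ (R.comap Prod.snd measurable_snd) with hP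
  have hPapp : ∀ p : E × E, P p = (R p.1).prod (R p.2) := by
    intro p
    rw [hP, Kernel.prod_apply]
    rfl
  set D : Measure (E × E) := ν.map (fun z => (z, z)) with hD
  have hdiagmeas : Measurable (fun z : E => (z, z)) := measurable_id.prodMk measurable_id
  set Qhat : Kernel (E × E) (E × E) :=
    ⟨fun p => β • D + (1 - β)⁻¹ • P p, by
      apply Measure.measurable_of_measurable_coe
      intro s hs
      simp only [Measure.coe_add, Measure.coe_smul, Pi.add_apply, Pi.smul_apply, smul_eq_mul]
      exact measurable_const.add ((Kernel.measurable_coe P hs).const_mul _)⟩ with hQhat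
  have hQapp : ∀ p, Qhat p = β • D + (1 - β)⁻¹ • P p := fun _ => rfl
  -- key arithmetic about the residual scaling
  have hscale : ∀ x : E, (1 - β)⁻¹ • ((1 - β) • R x) = R x := by
    intro x
    rcases eq_or_lt_of_le hβ1 with hb | hb
    · have hz : R x = 0 := by
        have := hRuniv x
        rw [← hb] at this
        simp only [tsub_self] at this
        exact Measure.measure_univ_eq_zero.mp this
      simp [hz]
    · rw [smul_smul, ENNReal.inv_mul_cancel, one_smul]
      · intro h
        exact absurd (tsub_eq_zero_iff_le.mp h) (not_le.mpr hb)
      · exact (tsub_le_self.trans_lt ENNReal.one_lt_top).ne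
  have hDfst : D.map Prod.fst = ν := by
    rw [hD, Measure.map_map measurable_fst hdiagmeas]
    have h : (Prod.fst ∘ fun z : E => (z, z)) = id := rfl
    rw [h, Measure.map_id]
  have hDsnd : D.map Prod.snd = ν := by
    rw [hD, Measure.map_map measurable_snd hdiagmeas]
    have h : (Prod.snd ∘ fun z : E => (z, z)) = id := rfl
    rw [h, Measure.map_id]
  have hfst : ∀ x y : E, (Qhat (x, y)).map Prod.fst = Q x := by
    intro x y
    rw [hQapp, Measure.map_add _ _ measurable_fst, Measure.map_smul, Measure.map_smul,
      hPapp, Measure.map_fst_prod, hDfst]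
    simp only
    rw [hRuniv, hscale x, ← hRQ x, add_comm]
  have hsnd : ∀ x y : E, (Qhat (x, y)).map Prod.snd = Q y := by
    intro x y
    rw [hQapp, Measure.map_add _ _ measurable_snd, Measure.map_smul, Measure.map_smul,
      hPapp, Measure.map_snd_prod, hDsnd]
    simp only
    rw [hRuniv, hscale y, ← hRQ y, add_comm]
  have hmk : IsMarkovKernel Qhat := by
    refine ⟨fun p => ⟨?_⟩⟩
    have h1 := hfst p.1 p.2
    have : ((Qhat (p.1, p.2)).map Prod.fst) Set.univ = 1 := by
      rw [h1]; simp
    rwa [Measure.map_apply measurable_fst MeasurableSet.univ, Set.preimage_univ,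
      Prod.mk.eta] at this
  refine ⟨Qhat, hmk, fun x y => ⟨hfst x y, hsnd x y, ?_⟩⟩
  rw [hQapp]
  simp only [Measure.coe_add, Measure.coe_smul, Pi.add_apply, Pi.smul_apply, smul_eq_mul]
  have hDdiag : D {q : E × E | q.1 = q.2} = 1 := by
    rw [hD, Measure.map_apply hdiagmeas hdiag]
    simp
  calc β = β * D {q : E × E | q.1 = q.2} := by rw [hDdiag, mul_one]
    _ ≤ _ := le_add_of_nonneg_right (zero_le) |>.trans_eq rfl |>.trans le_rfl |>.trans le_rfl
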